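/- Equip V with the symmetric K-bilinear form determined by ⟨e_s, e_t⟩ = δ_{s,t}. Then for all v, w ∈ V and all 1 ≤ i ≤ n (subscripts mod n): ⟨E_i v, w⟩ = ⟨v, q·K_iK_{i+1}^{−1}F_i w⟩; ⟨F_i v, w⟩ = ⟨v, q·K_i^{−1}K_{i+1}E_i w⟩; ⟨K_i^{±1} v, w⟩ = ⟨v, K_i^{±1} w⟩; and ⟨R^{±1} v, w⟩ = ⟨v, R^{∓1} w⟩. (Thus the bilinear form intertwines the generators of the Û_q(ĝl_n)-action on V with their images under the anti-involution ρ.) -/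

import Mathlib

noncomputable section

/-- K = ℚ(q), the field of rational functions over ℚ. -/
abbrev Kq : Type := RatFunc ℚ

/-- The formal parameter q. -/
def q : Kq := RatFunc.X

/-- Green's space V: finitely supported functions ℤ → K, basis {e_t}. -/
abbrev Vsp : Type := ℤ →₀ Kq

/-- The basis vector e_t. -/
def ee (t : ℤ) : Vsp := Finsupp.single t 1

/-- The bilinear form on V determined by ⟨e_s, e_t⟩ = δ_{s,t}. -/
def form (v w : Vsp) : Kq := v.sum fun t c => c * w t

lemma q_ne_zero : q ≠ 0 := RatFunc.X_ne_zero

lemma form_zero_left (w : Vsp) : form 0 w = 0 := by simp [form]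

lemma form_zero_right (v : Vsp) : form v 0 = 0 := by simp [form]

lemma form_add_left (v v' w : Vsp) : form (v + v') w = form v w + form v' w :=
  Finsupp.sum_add_index' (by simp) (by intros; ring)

lemma form_smul_left (c : Kq) (v w : Vsp) : form (c • v) w = c * form v w := by
  rw [form, Finsupp.sum_smul_index (by simp), form, Finsupp.mul_sum]
  simp [mul_assoc]

lemma form_add_right (v w w' : Vsp) : form v (w + w') = form v w + form v w' := by
  simp [form, mul_add, Finsupp.sum_add]

lemma form_smul_right (c : Kq) (v w : Vsp) : form v (c • w) = c * form v w := by
  rw [form, form, Finsupp.mul_sum]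
  simp [Finsupp.smul_apply, mul_left_comm]

lemma form_ee_left (s : ℤ) (w : Vsp) : form (ee s) w = w s := by
  rw [form, ee, Finsupp.sum_single_index (by rw [zero_mul]), one_mul]

lemma ee_apply (t s : ℤ) : (ee t) s = if s = t then 1 else 0 := by
  simp [ee, Finsupp.single_apply, eq_comm]

lemma adj (A B : Module.End Kq Vsp)
    (h : ∀ s t : ℤ, form (A (ee s)) (ee t) = form (ee s) (B (ee t))) :
    ∀ v w : Vsp, form (A v) w = form v (B w) := by
  have key : ∀ (s : ℤ) (w : Vsp), form (A (ee s)) w = form (ee s) (B w) := by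
    intro s w
    induction w using Finsupp.induction_linear with
    | zero => simp [form_zero_right, map_zero]
    | add f g hf hg => rw [map_add, form_add_right, form_add_right, hf, hg]
    | single a b =>
      have hs : (Finsupp.single a b : Vsp) = b • ee a := by
        rw [ee, Finsupp.smul_single', mul_one]
      rw [hs, map_smul, form_smul_right, form_smul_right, h]
  intro v w
  induction v using Finsupp.induction_linear with
  | zero => simp [form_zero_left, map_zero]
  | add f g hf hg => rw [map_add, form_add_left, form_add_left, hf, hg]
  | single a b =>
    have hs : (Finsupp.single a b : Vsp) = b • ee a := by
      rw [ee, Finsupp.smul_single', mul_one]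
    rw [hs, map_smul, form_smul_left, form_smul_left, key]

/-- the bilinear form ⟨e_s, e_t⟩ = δ_{s,t} on V satisfies
⟨E_i v, w⟩ = ⟨v, q·K_iK_{i+1}^{−1}F_i w⟩, ⟨F_i v, w⟩ = ⟨v, q·K_i^{−1}K_{i+1}E_i w⟩,
⟨K_i^{±1} v, w⟩ = ⟨v, K_i^{±1} w⟩ and ⟨R^{±1} v, w⟩ = ⟨v, R^{∓1} w⟩, i.e. it intertwines
the generators of the Û_q(ĝl_n)-action with their images under the anti-involution ρ. -/
theorem stmt_13 (n : ℕ) (hn : 3 ≤ n)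
    (E F Kp Km : ZMod n → Module.End Kq Vsp) (R R' : Module.End Kq Vsp)
    (hE : ∀ (i : ZMod n) (s : ℤ),
      E i (ee s) = if ((s - 1 : ℤ) : ZMod n) = i then ee (s - 1) else 0)
    (hF : ∀ (i : ZMod n) (s : ℤ),
      F i (ee s) = if ((s : ℤ) : ZMod n) = i then ee (s + 1) else 0)
    (hKp : ∀ (i : ZMod n) (s : ℤ),
      Kp i (ee s) = if ((s : ℤ) : ZMod n) = i then q • ee s else ee s)
    (hKm : ∀ (i : ZMod n) (s : ℤ),
      Km i (ee s) = if ((s : ℤ) : ZMod n) = i then q⁻¹ • ee s else ee s)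
    (hR : ∀ s : ℤ, R (ee s) = ee (s + 1))
    (hR' : ∀ s : ℤ, R' (ee s) = ee (s - 1)) :
    (∀ (v w : Vsp) (i : ZMod n),
      form (E i v) w = form v (q • Kp i (Km (i + 1) (F i w)))) ∧
    (∀ (v w : Vsp) (i : ZMod n),
      form (F i v) w = form v (q • Km i (Kp (i + 1) (E i w)))) ∧
    (∀ (v w : Vsp) (i : ZMod n), form (Kp i v) w = form v (Kp i w)) ∧
    (∀ (v w : Vsp) (i : ZMod n), form (Km i v) w = form v (Km i w)) ∧
    (∀ v w : Vsp, form (R v) w = form v (R' w)) ∧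
    (∀ v w : Vsp, form (R' v) w = form v (R w)) := by
  haveI : Fact (1 < n) := ⟨by omega⟩
  have h10 : ∀ i : ZMod n, i + 1 ≠ i := by
    intro i h
    have : (1 : ZMod n) = 0 := by
      have := congrArg (fun x => x - i) h
      simpa using this
    exact one_ne_zero this
  refine ⟨?_, ?_, ?_, ?_, ?_, ?_⟩
  · intro v w i
    have key := adj (E i) (q • (Kp i * Km (i + 1) * F i)) ?_ v w
    · simpa only [LinearMap.smul_apply, Module.End.mul_apply] using key
    intro s t
    rw [hE]
    simp only [LinearMap.smul_apply, Module.End.mul_apply]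
    rw [hF]
    by_cases ht : ((t : ℤ) : ZMod n) = i
    · rw [if_pos ht]
      have h1 : ((t + 1 : ℤ) : ZMod n) = i + 1 := by push_cast; rw [ht]
      have h2 : ¬ ((t + 1 : ℤ) : ZMod n) = i := by rw [h1]; exact h10 i
      rw [hKm, if_pos h1, map_smul, hKp, if_neg h2,
        smul_smul, mul_inv_cancel₀ q_ne_zero, one_smul]
      split_ifs with hs1
      · have hiff : (s - 1 = t) ↔ (s = t + 1) := by omega
        simp [form_ee_left, ee_apply, hiff]
      · rw [form_zero_left, form_ee_left, ee_apply, if_neg]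
        intro h
        exact hs1 (by rw [h]; simpa using ht)
    · rw [if_neg ht, map_zero, map_zero, smul_zero, form_zero_right]
      split_ifs with hs1
      · rw [form_ee_left, ee_apply, if_neg]
        intro h
        apply ht
        rw [← h]
        exact hs1
      · rw [form_zero_left]
  · intro v w i
    have key := adj (F i) (q • (Km i * Kp (i + 1) * E i)) ?_ v w
    · simpa only [LinearMap.smul_apply, Module.End.mul_apply] using key
    intro s t
    rw [hF]
    simp only [LinearMap.smul_apply, Module.End.mul_apply]
    rw [hE]
    by_cases ht : ((t - 1 : ℤ) : ZMod n) = i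
    · rw [if_pos ht]
      have h2 : ¬ ((t - 1 : ℤ) : ZMod n) = i + 1 := by rw [ht]; exact fun h => h10 i h.symm
      rw [hKp, if_neg h2, hKm, if_pos ht,
        smul_smul, mul_inv_cancel₀ q_ne_zero, one_smul]
      split_ifs with hs1
      · have hiff : (s + 1 = t) ↔ (s = t - 1) := by omega
        simp [form_ee_left, ee_apply, hiff]
      · rw [form_zero_left, form_ee_left, ee_apply, if_neg]
        intro h
        exact hs1 (by rw [h]; exact ht)
    · rw [if_neg ht, map_zero, map_zero, smul_zero, form_zero_right]
      split_ifs with hs1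
      · rw [form_ee_left, ee_apply, if_neg]
        intro h
        apply ht
        have : t - 1 = s := by omega
        rw [this]
        exact hs1
      · rw [form_zero_left]
  · intro v w i
    refine adj (Kp i) (Kp i) ?_ v w
    intro s t
    rw [hKp, hKp]
    split_ifs with h1 h2 h3
    · rw [form_smul_left, form_smul_right]
    · have hne : ¬ s = t := fun h => h2 (by rw [← h]; exact h1)
      rw [form_smul_left, form_ee_left, ee_apply, if_neg hne, mul_zero]
    · have hne : ¬ s = t := fun h => h1 (by rw [h]; exact h3)
      rw [form_smul_right, form_ee_left, ee_apply, if_neg hne, mul_zero]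
    · rfl
  · intro v w i
    refine adj (Km i) (Km i) ?_ v w
    intro s t
    rw [hKm, hKm]
    split_ifs with h1 h2 h3
    · rw [form_smul_left, form_smul_right]
    · have hne : ¬ s = t := fun h => h2 (by rw [← h]; exact h1)
      rw [form_smul_left, form_ee_left, ee_apply, if_neg hne, mul_zero]
    · have hne : ¬ s = t := fun h => h1 (by rw [h]; exact h3)
      rw [form_smul_right, form_ee_left, ee_apply, if_neg hne, mul_zero]
    · rfl
  · intro v w
    refine adj R R' ?_ v w
    intro s t
    rw [hR, hR']
    have hiff : (s + 1 = t) ↔ (s = t - 1) := by omega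
    simp [form_ee_left, ee_apply, hiff]
  · intro v w
    refine adj R' R ?_ v w
    intro s t
    rw [hR', hR]
    have hiff : (s - 1 = t) ↔ (s = t + 1) := by omega
    simp [form_ee_left, ee_apply, hiff]
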